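/- A regular pentagon cannot be realized with all vertices having rational coordinates in the plane: there do not exist five points in ℚ² that are the vertices of a regular pentagon. -/

import Mathlib

theorem no_rational_regular_pentagon :
    ¬ ∃ (w : Fin 5 → ℚ × ℚ) (c z : ℂ), z ≠ 0 ∧
      ∀ k : Fin 5,
        ((w k).1 : ℂ) + ((w k).2 : ℂ) * Complex.I =
          c + z * Complex.exp (2 * Real.pi * Complex.I * (k : ℕ) / 5) := by
  rintro ⟨w, c, z, hz, h⟩
  set ζ : ℂ := Complex.exp (2 * Real.pi * Complex.I / 5) with hζ
  -- ζ = exp ((2π/5 : ℝ) * I)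
  have hζ' : ζ = Complex.exp (((2 * Real.pi / 5 : ℝ) : ℂ) * Complex.I) := by
    rw [hζ]; congr 1; push_cast; ring
  have hζre : ζ.re = Real.cos (2 * Real.pi / 5) := by
    rw [hζ', Complex.exp_ofReal_mul_I_re]
  have hζim : ζ.im = Real.sin (2 * Real.pi / 5) := by
    rw [hζ', Complex.exp_ofReal_mul_I_im]
  have hζne1 : ζ ≠ 1 := by
    intro hh
    have : Real.sin (2 * Real.pi / 5) = 0 := by rw [← hζim, hh]; simp
    have hpos : 0 < Real.sin (2 * Real.pi / 5) := by
      apply Real.sin_pos_of_pos_of_lt_pi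
      · positivity
      · nlinarith [Real.pi_pos]
    linarith
  have h0 := h 0
  have h1 := h 1
  have h2 := h 2
  simp only [Fin.val_zero, Fin.val_one] at h0 h1
  have e0 : ((w 0).1 : ℂ) + ((w 0).2 : ℂ) * Complex.I = c + z := by
    rw [h0]; norm_num
  have e1 : ((w 1).1 : ℂ) + ((w 1).2 : ℂ) * Complex.I = c + z * ζ := by
    rw [h1, hζ]; norm_num
  have e2 : ((w 2).1 : ℂ) + ((w 2).2 : ℂ) * Complex.I = c + z * ζ ^ 2 := by
    rw [h2, hζ]
    congr 2
    rw [← Complex.exp_nat_mul]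
    have h22 : ((2 : Fin 5) : ℕ) = 2 := rfl
    rw [h22]
    push_cast
    ring
  set u : ℂ := z * (ζ - 1) with hu
  have hune : u ≠ 0 := mul_ne_zero hz (sub_ne_zero.mpr hζne1)
  have hu1 : ((w 1).1 - (w 0).1 : ℚ) + ((w 1).2 - (w 0).2 : ℚ) * Complex.I = u := by
    push_cast
    rw [hu]
    have := congrArg₂ (· - ·) e1 e0
    linear_combination this
  have hv : ((w 2).1 - (w 1).1 : ℚ) + ((w 2).2 - (w 1).2 : ℚ) * Complex.I = ζ * u := by
    push_cast
    rw [hu]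
    have := congrArg₂ (· - ·) e2 e1
    linear_combination this
  -- ζ = v / u, so ζ.re is rational
  set p : ℚ := (w 1).1 - (w 0).1
  set q : ℚ := (w 1).2 - (w 0).2
  set r : ℚ := (w 2).1 - (w 1).1
  set s : ℚ := (w 2).2 - (w 1).2
  have hure : u.re = (p : ℝ) := by rw [← hu1]; simp
  have huim : u.im = (q : ℝ) := by rw [← hu1]; simp
  have hnormsq : Complex.normSq u = ((p^2 + q^2 : ℚ) : ℝ) := by
    rw [Complex.normSq_apply, hure, huim]; push_cast; ring
  have hnsne : (p^2 + q^2 : ℚ) ≠ 0 := by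
    intro hh
    apply hune
    rw [← Complex.normSq_eq_zero, hnormsq, hh]; norm_num
  have hζval : ζ = (↑r + ↑s * Complex.I) / u := by
    rw [eq_div_iff hune, ← hv]
  have hre : ζ.re = (((r * p + s * q) / (p^2 + q^2) : ℚ) : ℝ) := by
    rw [hζval, Complex.div_re, hure, huim, hnormsq]
    have : ((r:ℂ) + (s:ℂ) * Complex.I).re = (r:ℝ) := by simp
    have h2 : ((r:ℂ) + (s:ℂ) * Complex.I).im = (s:ℝ) := by simp
    rw [this, h2]
    push_cast
    field_simp
  -- cos(2π/5) = (√5 - 1)/4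
  have hcos : Real.cos (2 * Real.pi / 5) = (Real.sqrt 5 - 1) / 4 := by
    have h2 : (2 : ℝ) * (Real.pi / 5) = 2 * Real.pi / 5 := by ring
    have := Real.cos_two_mul (Real.pi / 5)
    rw [h2, Real.cos_pi_div_five] at this
    rw [this]
    have h5 : Real.sqrt 5 ^ 2 = 5 := Real.sq_sqrt (by norm_num)
    nlinarith [h5]
  have hirr : Irrational (Real.sqrt 5) := by
    have := (by norm_num : Nat.Prime 5).irrational_sqrt
    simpa using this
  apply hirr
  refine ⟨4 * ((r * p + s * q) / (p^2 + q^2)) + 1, ?_⟩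
  have : ((((r * p + s * q) / (p^2 + q^2) : ℚ)) : ℝ) = (Real.sqrt 5 - 1) / 4 := by
    rw [← hre, hζre, hcos]
  push_cast at this ⊢
  linarith
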